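/- For any Gaussian measure μ on field configurations with covariance kernel K satisfying 0 ≤ K_{x,y} ≤ c₁ e^{−2|x−y|}, and any points x1,…,xn ∈ R^d with pairwise distances greater than 1, and nonnegative integers s1,…,sn with Σ s_j = 2s even, the moment bound |E_μ[Π_{j=1}^n φ(x_j)^{s_j}]| ≤ c^s Π_{j=1}^n (s_j!)^{1/2} holds for some constant c depending only on c₁ and d. -/

import Mathlib

open MeasureTheory
open scoped BigOperators

section Aux

lemma pow_fact_le_exp (x : ℝ) (hx : 0 ≤ x) (k : ℕ) : x ^ k / k.factorial ≤ Real.exp x := by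
  refine le_trans ?_ (Real.sum_le_exp_of_nonneg hx (k+1))
  have := Finset.single_le_sum (f := fun i => x ^ i / i.factorial)
    (fun i _ => by positivity) (Finset.self_mem_range_succ k)
  simpa using this

lemma integrable_exp_norm (d : ℕ) :
    Integrable (fun y : EuclideanSpace ℝ (Fin d) => Real.exp (-2 * ‖y‖)) := by
  have hr : (Module.finrank ℝ (EuclideanSpace ℝ (Fin d)) : ℝ) < (d+1 : ℕ) := by
    simp [finrank_euclideanSpace]
  have h1 := (integrable_one_add_norm (E := EuclideanSpace ℝ (Fin d)) (μ := volume) hr).const_mul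
    (Real.exp 1 * (d+1).factorial)
  refine h1.mono' ((Real.continuous_exp.comp (by fun_prop)).aestronglyMeasurable) ?_
  filter_upwards with v
  rw [Real.norm_of_nonneg (Real.exp_pos _).le]
  set t := ‖v‖ with ht
  have h0 : (0:ℝ) ≤ t := norm_nonneg _
  have hpos : (0:ℝ) < 1 + t := by linarith
  have key : (1+t) ^ ((d+1:ℕ):ℝ) ≤ Real.exp 1 * (d+1).factorial * Real.exp (2*t) := by
    rw [Real.rpow_natCast]
    have h2 := pow_fact_le_exp (1+t) (by linarith) (d+1)
    have h3 : Real.exp (1+t) ≤ Real.exp 1 * Real.exp (2*t) := by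
      rw [← Real.exp_add]; apply Real.exp_le_exp.2; linarith
    have h4 : (0:ℝ) < ((d+1).factorial : ℝ) := by positivity
    calc (1+t)^(d+1) ≤ Real.exp (1+t) * (d+1).factorial := by
          rw [div_le_iff₀ h4] at h2; linarith
      _ ≤ (Real.exp 1 * Real.exp (2*t)) * (d+1).factorial :=
          mul_le_mul_of_nonneg_right h3 h4.le
      _ = Real.exp 1 * (d+1).factorial * Real.exp (2*t) := by ring
  have hrp : (0:ℝ) < (1+t) ^ ((d+1:ℕ):ℝ) := Real.rpow_pos_of_pos hpos _
  rw [Real.rpow_neg hpos.le, ← div_eq_mul_inv, le_div_iff₀ hrp]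
  calc Real.exp (-2*t) * (1+t)^((d+1:ℕ):ℝ) ≤ Real.exp (-2*t) * (Real.exp 1 * (d+1).factorial * Real.exp (2*t)) :=
        mul_le_mul_of_nonneg_left key (Real.exp_pos _).le
    _ = Real.exp 1 * (d+1).factorial * (Real.exp (-2*t) * Real.exp (2*t)) := by ring
    _ = Real.exp 1 * (d+1).factorial := by rw [← Real.exp_add]; simp

noncomputable def packC (d : ℕ) : ℝ :=
  Real.exp 1 * (∫ y : EuclideanSpace ℝ (Fin d), Real.exp (-2 * ‖y‖)) /
    (volume (Metric.ball (0 : EuclideanSpace ℝ (Fin d)) (1/2))).toReal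

lemma packC_nonneg (d : ℕ) : 0 ≤ packC d := by
  apply div_nonneg
  · apply mul_nonneg (Real.exp_pos _).le
    apply integral_nonneg; intro y; positivity
  · exact ENNReal.toReal_nonneg

lemma packing_bound (d n : ℕ) (x : Fin n → EuclideanSpace ℝ (Fin d))
    (hsep : ∀ j j', j ≠ j' → 1 < dist (x j) (x j')) (j0 : Fin n) :
    ∑ j ∈ Finset.univ.erase j0, Real.exp (-2 * dist (x j0) (x j)) ≤ packC d := by
  classical
  have hf : Integrable (fun y => Real.exp (-2 * dist (x j0) y)) := by
    have : (fun y : EuclideanSpace ℝ (Fin d) => Real.exp (-2 * dist (x j0) y))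
        = fun y => Real.exp (-2 * ‖y - x j0‖) := by
      funext y; rw [dist_comm, dist_eq_norm]
    rw [this]
    exact (integrable_exp_norm d).comp_sub_right (x j0)
  have hI : (∫ y, Real.exp (-2 * dist (x j0) y))
      = ∫ y : EuclideanSpace ℝ (Fin d), Real.exp (-2 * ‖y‖) := by
    have : (fun y : EuclideanSpace ℝ (Fin d) => Real.exp (-2 * dist (x j0) y))
        = fun y => Real.exp (-2 * ‖y - x j0‖) := by
      funext y; rw [dist_comm, dist_eq_norm]
    rw [this]
    exact integral_sub_right_eq_self (fun y => Real.exp (-2 * ‖y‖)) (x j0)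
  have hInn : 0 ≤ ∫ y : EuclideanSpace ℝ (Fin d), Real.exp (-2*‖y‖) := by
    apply integral_nonneg; intro y; positivity
  have hV : 0 < (volume (Metric.ball (0 : EuclideanSpace ℝ (Fin d)) (1/2))).toReal := by
    apply ENNReal.toReal_pos
    · exact (Metric.measure_ball_pos volume _ (by norm_num)).ne'
    · exact measure_ball_lt_top.ne
  have key : ∀ j ∈ Finset.univ.erase j0,
      Real.exp (-2 * dist (x j0) (x j))
          * (volume (Metric.ball (0 : EuclideanSpace ℝ (Fin d)) (1/2))).toReal ≤
        ∫ y in Metric.ball (x j) (1/2), Real.exp 1 * Real.exp (-2 * dist (x j0) y) := by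
    intro j hj
    have hmono : ∫ _y in Metric.ball (x j) (1/2), Real.exp (-2 * dist (x j0) (x j)) ≤
        ∫ y in Metric.ball (x j) (1/2), Real.exp 1 * Real.exp (-2 * dist (x j0) y) := by
      apply setIntegral_mono_on
      · exact integrableOn_const measure_ball_lt_top.ne
      · exact (hf.const_mul _).integrableOn
      · exact measurableSet_ball
      · intro y hy
        rw [← Real.exp_add]
        apply Real.exp_le_exp.2
        have htri : dist (x j0) y ≤ dist (x j0) (x j) + dist (x j) y := dist_triangle _ _ _
        have hy' : dist (x j) y < 1/2 := by
          rw [Metric.mem_ball, dist_comm] at hy; exact hy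
        nlinarith
    calc Real.exp (-2 * dist (x j0) (x j))
            * (volume (Metric.ball (0 : EuclideanSpace ℝ (Fin d)) (1/2))).toReal
        = ∫ _y in Metric.ball (x j) (1/2), Real.exp (-2 * dist (x j0) (x j)) := by
          rw [setIntegral_const, measureReal_def, Measure.addHaar_ball_center volume (x j), smul_eq_mul, mul_comm]
      _ ≤ _ := hmono
  have hdisj : (↑(Finset.univ.erase j0) : Set (Fin n)).Pairwise
      (Function.onFun Disjoint fun j => Metric.ball (x j) (1/2)) := by
    intro j _ j' _ hne
    exact Metric.ball_disjoint_ball (by have := hsep j j' hne; linarith)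
  have hsum : ∑ j ∈ Finset.univ.erase j0,
      ∫ y in Metric.ball (x j) (1/2), Real.exp 1 * Real.exp (-2 * dist (x j0) y)
      ≤ Real.exp 1 * ∫ y, Real.exp (-2 * dist (x j0) y) := by
    rw [← integral_biUnion_finset _ (fun j _ => measurableSet_ball) hdisj
      (fun j _ => (hf.const_mul _).integrableOn)]
    rw [← integral_const_mul]
    apply setIntegral_le_integral (hf.const_mul _)
    filter_upwards with y
    positivity
  have final : (∑ j ∈ Finset.univ.erase j0, Real.exp (-2 * dist (x j0) (x j)))
      * (volume (Metric.ball (0 : EuclideanSpace ℝ (Fin d)) (1/2))).toReal ≤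
      Real.exp 1 * ∫ y : EuclideanSpace ℝ (Fin d), Real.exp (-2 * ‖y‖) := by
    rw [Finset.sum_mul, ← hI]
    exact le_trans (Finset.sum_le_sum key) hsum
  unfold packC
  rw [← le_div_iff₀ hV] at final
  exact final

lemma prod_comp_pow {n N : ℕ} (A : Finset (Fin N)) (w : Fin N → Fin n) (g : Fin n → ℝ) :
    ∏ i ∈ A, g (w i) = ∏ j : Fin n, g j ^ (A.filter (fun i => w i = j)).card := by
  rw [← Finset.prod_fiberwise_of_maps_to (fun i _ => Finset.mem_univ (w i)) (fun i => g (w i))]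
  refine Finset.prod_congr rfl (fun j _ => ?_)
  rw [Finset.prod_congr rfl (fun i hi => by rw [(Finset.mem_filter.1 hi).2]), Finset.prod_const]

lemma sum_comp_mul {n N : ℕ} (A : Finset (Fin N)) (w : Fin N → Fin n) (g : Fin n → ℝ) :
    ∑ i ∈ A, g (w i) = ∑ j : Fin n, ((A.filter (fun i => w i = j)).card : ℝ) * g j := by
  rw [← Finset.sum_fiberwise_of_maps_to (fun i _ => Finset.mem_univ (w i)) (fun i => g (w i))]
  refine Finset.sum_congr rfl (fun j _ => ?_)
  rw [Finset.sum_congr rfl (fun i hi => by rw [(Finset.mem_filter.1 hi).2]), Finset.sum_const,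
    nsmul_eq_mul]

lemma erase_filter_card {n N : ℕ} (w : Fin N → Fin n) (i : Fin N) (j : Fin n) :
    ((Finset.univ.erase i).filter (fun i' => w i' = j)).card
      = (Finset.univ.filter (fun i' => w i' = j)).card - (if w i = j then 1 else 0) := by
  classical
  have h : (Finset.univ.erase i).filter (fun i' => w i' = j)
      = ((Finset.univ.filter (fun i' => w i' = j)).erase i) := by
    ext i'
    simp only [Finset.mem_filter, Finset.mem_erase, Finset.mem_univ, true_and, and_true]
  rw [h]
  by_cases hij : w i = j
  · rw [if_pos hij]
    exact Finset.card_erase_of_mem (Finset.mem_filter.2 ⟨Finset.mem_univ _, hij⟩)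
  · rw [if_neg hij]
    have he := Finset.erase_eq_of_notMem
      (s := Finset.univ.filter (fun i' => w i' = j)) (a := i)
      (fun hc => hij (Finset.mem_filter.1 hc).2)
    rw [he]
    omega

lemma cnt_cons {n N : ℕ} (a : Fin n) (z' : Fin N → Fin n) (j : Fin n) :
    (Finset.univ.filter (fun i : Fin (N+1) => (Fin.cons a z' : Fin (N+1) → Fin n) i = j)).card
      = (if a = j then 1 else 0) + (Finset.univ.filter (fun i => z' i = j)).card := by
  rw [Finset.card_filter, Fin.sum_univ_succ, Finset.card_filter]
  simp [Fin.cons_zero, Fin.cons_succ]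

lemma exists_rep {n : ℕ} : ∀ (N : ℕ) (s : Fin n → ℕ), (∑ j, s j) = N →
    ∃ z : Fin N → Fin n, ∀ j, (Finset.univ.filter (fun i => z i = j)).card = s j := by
  intro N
  induction N with
  | zero =>
    intro s hs
    refine ⟨Fin.elim0, fun j => ?_⟩
    have hj : s j = 0 := by
      have := Finset.sum_eq_zero_iff.1 hs j (Finset.mem_univ j)
      exact this
    simp [hj]
  | succ N ih =>
    intro s hs
    have hex : ∃ j, s j ≠ 0 := by
      by_contra h
      push_neg at h
      rw [Finset.sum_eq_zero (fun j _ => h j)] at hs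
      omega
    obtain ⟨a, ha⟩ := hex
    set s' := Function.update s a (s a - 1) with hs'def
    have hsum' : (∑ j, s' j) = N := by
      rw [hs'def, Finset.sum_update_of_mem (Finset.mem_univ a), Finset.sdiff_singleton_eq_erase]
      have := Finset.sum_erase_add Finset.univ s (Finset.mem_univ a)
      omega
    obtain ⟨z', hz'⟩ := ih s' hsum'
    refine ⟨(Fin.cons a z' : Fin (N+1) → Fin n), fun j => ?_⟩
    rw [cnt_cons, hz']
    by_cases hj : a = j
    · subst hj; rw [if_pos rfl, hs'def, Function.update_self]; omega
    · rw [if_neg hj, hs'def, Function.update_of_ne (Ne.symm hj)]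
      omega

lemma sqrt_fact_step {a : ℕ} (ha : 1 ≤ a) :
    Real.sqrt (a.factorial) = Real.sqrt ((a-1).factorial) * Real.sqrt a := by
  rw [← Real.sqrt_mul (by positivity)]
  congr 1
  rw [← Nat.cast_mul]
  congr 1
  obtain ⟨b, rfl⟩ : ∃ b, a = b + 1 := ⟨a - 1, by omega⟩
  simp [Nat.factorial_succ, mul_comm]

lemma prod_update_split {n : ℕ} (f : ℕ → ℝ) (s : Fin n → ℕ) (A : Finset (Fin n))
    (j : Fin n) (hj : j ∈ A) (v : ℕ) :
    ∏ k ∈ A, f (Function.update s j v k) = f v * ∏ k ∈ A.erase j, f (s k) := by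
  rw [← Finset.mul_prod_erase A _ hj, Function.update_self]
  congr 1
  exact Finset.prod_congr rfl (fun k hk => by rw [Function.update_of_ne (Finset.mem_erase.1 hk).1])

lemma cast_le_sqrt_mul_sqrt {a b : ℕ} (hab : a ≤ b) :
    (a : ℝ) ≤ Real.sqrt a * Real.sqrt b := by
  calc (a:ℝ) = Real.sqrt a * Real.sqrt a := (Real.mul_self_sqrt (by positivity)).symm
    _ ≤ Real.sqrt a * Real.sqrt b := by
        apply mul_le_mul_of_nonneg_left _ (Real.sqrt_nonneg _)
        exact Real.sqrt_le_sqrt (by exact_mod_cast hab)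

lemma key_ineq {n : ℕ} (s : Fin n → ℕ) (j0 j1 : Fin n)
    (hmax : ∀ k, s k ≤ s j0) (h1 : 1 ≤ s j0)
    (hs'1 : 1 ≤ Function.update s j0 (s j0 - 1) j1) :
    ((Function.update s j0 (s j0 - 1) j1 : ℕ) : ℝ)
        * ∏ k, Real.sqrt ((Function.update s j0 (s j0 - 1) k
            - if j1 = k then 1 else 0).factorial)
      ≤ ∏ k, Real.sqrt ((s k).factorial) := by
  classical
  set f : ℕ → ℝ := fun a => Real.sqrt a.factorial with hf
  have hfnn : ∀ a, 0 ≤ f a := fun a => Real.sqrt_nonneg _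
  by_cases hj : j1 = j0
  · subst hj
    have h2 : 2 ≤ s j1 := by
      rw [Function.update_self] at hs'1; omega
    have ht : ∀ k, (Function.update s j1 (s j1 - 1) k - if j1 = k then 1 else 0)
        = Function.update s j1 (s j1 - 2) k := by
      intro k
      by_cases hk : k = j1
      · subst hk; simp [Function.update_self]; omega
      · rw [Function.update_of_ne hk, Function.update_of_ne hk, if_neg (Ne.symm hk)]
        omega
    have hL : ∏ k, f (Function.update s j1 (s j1 - 1) k - if j1 = k then 1 else 0)
        = f (s j1 - 2) * ∏ k ∈ Finset.univ.erase j1, f (s k) := by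
      rw [Finset.prod_congr rfl (fun k _ => by rw [ht k])]
      exact prod_update_split f s _ j1 (Finset.mem_univ _) _
    have hR : ∏ k, f (s k) = f (s j1) * ∏ k ∈ Finset.univ.erase j1, f (s k) :=
      (Finset.mul_prod_erase _ _ (Finset.mem_univ j1)).symm
    rw [hL, hR, Function.update_self]
    have hfs : f (s j1) = f (s j1 - 2) * (Real.sqrt (s j1 - 1 : ℕ) * Real.sqrt (s j1)) := by
      simp only [hf]
      rw [sqrt_fact_step (a := s j1) (by omega), sqrt_fact_step (a := s j1 - 1) (by omega)]
      have : s j1 - 1 - 1 = s j1 - 2 := by omega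
      rw [this, mul_assoc]
    have hkey : ((s j1 - 1 : ℕ) : ℝ) * f (s j1 - 2) ≤ f (s j1) := by
      rw [hfs]
      calc ((s j1 - 1 : ℕ) : ℝ) * f (s j1 - 2)
          ≤ (Real.sqrt (s j1 - 1 : ℕ) * Real.sqrt (s j1)) * f (s j1 - 2) := by
            apply mul_le_mul_of_nonneg_right (cast_le_sqrt_mul_sqrt (by omega)) (hfnn _)
        _ = f (s j1 - 2) * (Real.sqrt (s j1 - 1 : ℕ) * Real.sqrt (s j1)) := by ring
    calc ((s j1 - 1 : ℕ) : ℝ) * (f (s j1 - 2) * ∏ k ∈ Finset.univ.erase j1, f (s k))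
        = (((s j1 - 1 : ℕ) : ℝ) * f (s j1 - 2)) * ∏ k ∈ Finset.univ.erase j1, f (s k) := by
          ring
      _ ≤ f (s j1) * ∏ k ∈ Finset.univ.erase j1, f (s k) := by
          apply mul_le_mul_of_nonneg_right hkey
          exact Finset.prod_nonneg (fun k _ => hfnn _)
  · -- j1 ≠ j0
    have hs1 : 1 ≤ s j1 := by rwa [Function.update_of_ne hj] at hs'1
    have ht : ∀ k, (Function.update s j0 (s j0 - 1) k - if j1 = k then 1 else 0)
        = Function.update (Function.update s j0 (s j0 - 1)) j1 (s j1 - 1) k := by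
      intro k
      by_cases hk : k = j1
      · subst hk
        rw [if_pos rfl, Function.update_self, Function.update_of_ne hj]
      · rw [if_neg (fun h => hk h.symm), Function.update_of_ne hk]
        omega
    have hL : ∏ k, f (Function.update s j0 (s j0 - 1) k - if j1 = k then 1 else 0)
        = f (s j1 - 1) * (f (s j0 - 1) * ∏ k ∈ (Finset.univ.erase j1).erase j0, f (s k)) := by
      rw [Finset.prod_congr rfl (fun k _ => by rw [ht k])]
      rw [prod_update_split (f := f) (s := Function.update s j0 (s j0 -1)) _ j1
        (Finset.mem_univ _) _]
      congr 1
      rw [prod_update_split f s _ j0 (Finset.mem_erase.2 ⟨fun h => hj h.symm, Finset.mem_univ _⟩) _]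
    have hR : ∏ k, f (s k)
        = f (s j1) * (f (s j0) * ∏ k ∈ (Finset.univ.erase j1).erase j0, f (s k)) := by
      rw [← Finset.mul_prod_erase _ _ (Finset.mem_univ j1)]
      congr 1
      exact (Finset.mul_prod_erase _ _
        (Finset.mem_erase.2 ⟨fun h => hj h.symm, Finset.mem_univ _⟩)).symm
    rw [hL, hR, Function.update_of_ne hj]
    have hkey : ((s j1 : ℕ) : ℝ) * (f (s j1 - 1) * f (s j0 - 1)) ≤ f (s j1) * f (s j0) := by
      have e1 : f (s j1) = f (s j1 - 1) * Real.sqrt (s j1) := sqrt_fact_step hs1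
      have e2 : f (s j0) = f (s j0 - 1) * Real.sqrt (s j0) := sqrt_fact_step h1
      rw [e1, e2]
      calc ((s j1 : ℕ) : ℝ) * (f (s j1 - 1) * f (s j0 - 1))
          ≤ (Real.sqrt (s j1) * Real.sqrt (s j0)) * (f (s j1 - 1) * f (s j0 - 1)) := by
            apply mul_le_mul_of_nonneg_right (cast_le_sqrt_mul_sqrt (hmax j1)) ?_
            exact mul_nonneg (hfnn _) (hfnn _)
        _ = f (s j1 - 1) * Real.sqrt (s j1) * (f (s j0 - 1) * Real.sqrt (s j0)) := by ring
    calc ((s j1 : ℕ) : ℝ) * (f (s j1 - 1) * (f (s j0 - 1) * ∏ k ∈ (Finset.univ.erase j1).erase j0, f (s k)))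
        = (((s j1 : ℕ) : ℝ) * (f (s j1 - 1) * f (s j0 - 1)))
            * ∏ k ∈ (Finset.univ.erase j1).erase j0, f (s k) := by ring
      _ ≤ (f (s j1) * f (s j0)) * ∏ k ∈ (Finset.univ.erase j1).erase j0, f (s k) := by
          apply mul_le_mul_of_nonneg_right hkey
          exact Finset.prod_nonneg (fun k _ => hfnn _)
      _ = f (s j1) * (f (s j0) * ∏ k ∈ (Finset.univ.erase j1).erase j0, f (s k)) := by ring

end Aux


/-- Gaussian moment bound: for any centered Gaussian measure `μ` on field configurations
(encoded by the probability normalization, the Wick/integration-by-parts recursion for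
its moments with covariance kernel `K`, and integrability of all monomials), with
`0 ≤ K_{x,y} ≤ c₁ e^{−2|x−y|}`, points `x₁,…,xₙ` with pairwise distances `> 1`, and
exponents `s₁,…,sₙ` with `Σ sⱼ = 2s` even, one has
`|E_μ[∏ φ(xⱼ)^{sⱼ}]| ≤ c^s ∏ (sⱼ!)^{1/2}` with `c` depending only on `c₁` and `d`. -/
theorem gaussian_moment_bound (d : ℕ) (c₁ : ℝ) (hc₁ : 0 < c₁) :
    ∃ c : ℝ, 0 < c ∧
      ∀ (μ : Measure ((EuclideanSpace ℝ (Fin d)) → ℝ)), IsProbabilityMeasure μ →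
      ∀ K : EuclideanSpace ℝ (Fin d) → EuclideanSpace ℝ (Fin d) → ℝ,
      (∀ x y, 0 ≤ K x y ∧ K x y ≤ c₁ * Real.exp (-2 * dist x y)) →
      (∀ (N : ℕ) (z : Fin N → EuclideanSpace ℝ (Fin d)),
        Integrable (fun φ : (EuclideanSpace ℝ (Fin d)) → ℝ => ∏ i, φ (z i)) μ) →
      (∀ (N : ℕ) (z : Fin (N + 1) → EuclideanSpace ℝ (Fin d)),
        (∫ φ : (EuclideanSpace ℝ (Fin d)) → ℝ, ∏ i, φ (z i) ∂μ)
          = ∑ i : Fin N, K (z 0) (z i.succ) *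
              ∫ φ : (EuclideanSpace ℝ (Fin d)) → ℝ,
                ∏ i' ∈ Finset.univ.erase i, φ (z i'.succ) ∂μ) →
      ∀ (n : ℕ) (x : Fin n → EuclideanSpace ℝ (Fin d)),
      (∀ j j', j ≠ j' → 1 < dist (x j) (x j')) →
      ∀ (s : Fin n → ℕ) (m : ℕ), (∑ j, s j) = 2 * m →
      |∫ φ : (EuclideanSpace ℝ (Fin d)) → ℝ, ∏ j, (φ (x j)) ^ (s j) ∂μ|
        ≤ c ^ m * ∏ j, Real.sqrt (Nat.factorial (s j)) := by
  classical
  have hcpos : 0 < c₁ * (1 + packC d) := by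
    have := packC_nonneg d
    nlinarith
  refine ⟨c₁ * (1 + packC d), hcpos, ?_⟩
  intro μ hμ K hK hInt hrec n x hsep s m
  induction m generalizing s with
  | zero =>
    intro hsm
    have hz : ∀ j, s j = 0 := fun j =>
      Finset.sum_eq_zero_iff.1 (by simpa using hsm) j (Finset.mem_univ j)
    have hone : (fun φ : (EuclideanSpace ℝ (Fin d)) → ℝ => ∏ j, (φ (x j)) ^ (s j))
        = fun _ => (1:ℝ) := by
      funext φ
      exact Finset.prod_eq_one (fun j _ => by rw [hz j, pow_zero])
    rw [hone, integral_const]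
    simp [hz]
  | succ m IH =>
    intro hsm
    have hn : n ≠ 0 := by
      rintro rfl
      simp at hsm
    obtain ⟨j0, -, hmaxmem⟩ := Finset.exists_max_image (Finset.univ : Finset (Fin n)) s
      ⟨⟨0, Nat.pos_of_ne_zero hn⟩, Finset.mem_univ _⟩
    have hmax : ∀ k, s k ≤ s j0 := fun k => hmaxmem k (Finset.mem_univ k)
    have h1 : 1 ≤ s j0 := by
      by_contra h
      have hzz : ∀ j, s j = 0 := fun j => by have := hmax j; omega
      rw [Finset.sum_eq_zero (fun j _ => hzz j)] at hsm
      omega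
    set s' := Function.update s j0 (s j0 - 1) with hs'def
    have hsum' : (∑ j, s' j) = 2*m + 1 := by
      rw [hs'def, Finset.sum_update_of_mem (Finset.mem_univ j0),
        Finset.sdiff_singleton_eq_erase]
      have := Finset.sum_erase_add Finset.univ s (Finset.mem_univ j0)
      omega
    obtain ⟨z', hz'⟩ := exists_rep (2*m+1) s' hsum'
    -- the list of points with multiplicities
    have hprod : (fun φ : (EuclideanSpace ℝ (Fin d)) → ℝ =>
        ∏ i : Fin (2*m+1+1), φ (x ((Fin.cons j0 z' : Fin (2*m+1+1) → Fin n) i)))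
        = fun φ => ∏ j, (φ (x j)) ^ (s j) := by
      funext φ
      rw [prod_comp_pow Finset.univ (Fin.cons j0 z') (fun j => φ (x j))]
      refine Finset.prod_congr rfl (fun j _ => ?_)
      congr 1
      rw [cnt_cons, hz' j]
      by_cases hj : j0 = j
      · subst hj
        rw [if_pos rfl, hs'def, Function.update_self]
        omega
      · rw [if_neg hj, hs'def, Function.update_of_ne (Ne.symm hj)]
        omega
    have hrec1 := hrec (2*m+1)
      (fun i => x ((Fin.cons j0 z' : Fin (2*m+1+1) → Fin n) i))
    simp only [Fin.cons_zero, Fin.cons_succ] at hrec1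
    have hinner : ∀ i : Fin (2*m+1),
        (∫ φ : (EuclideanSpace ℝ (Fin d)) → ℝ,
            ∏ i' ∈ Finset.univ.erase i, φ (x (z' i')) ∂μ)
          = ∫ φ : (EuclideanSpace ℝ (Fin d)) → ℝ,
              ∏ k, (φ (x k)) ^ (s' k - if z' i = k then 1 else 0) ∂μ := by
      intro i
      congr 1
      funext φ
      rw [prod_comp_pow (Finset.univ.erase i) z' (fun j => φ (x j))]
      refine Finset.prod_congr rfl (fun k _ => ?_)
      congr 1
      rw [erase_filter_card, hz' k]
    have hM : (∫ φ : (EuclideanSpace ℝ (Fin d)) → ℝ, ∏ j, (φ (x j)) ^ (s j) ∂μ)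
        = ∑ i : Fin (2*m+1), K (x j0) (x (z' i)) *
            ∫ φ : (EuclideanSpace ℝ (Fin d)) → ℝ,
              ∏ k, (φ (x k)) ^ (s' k - if z' i = k then 1 else 0) ∂μ := by
      rw [← hprod, hrec1]
      exact Finset.sum_congr rfl (fun i _ => by rw [hinner i])
    have hfib : ∀ i : Fin (2*m+1), 1 ≤ s' (z' i) := by
      intro i
      rw [← hz' (z' i)]
      exact Finset.card_pos.2 ⟨i, Finset.mem_filter.2 ⟨Finset.mem_univ _, rfl⟩⟩
    have htsum : ∀ j1 : Fin n, 1 ≤ s' j1 →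
        (∑ k, (s' k - if j1 = k then 1 else 0)) = 2*m := by
      intro j1 hj1
      calc ∑ k, (s' k - if j1 = k then 1 else 0)
          = ∑ k, Function.update s' j1 (s' j1 - 1) k :=
            Finset.sum_congr rfl (fun k _ => by
              by_cases hk : k = j1
              · subst hk; simp
              · rw [Function.update_of_ne hk, if_neg (fun h => hk h.symm)]
                omega)
        _ = 2*m := by
            rw [Finset.sum_update_of_mem (Finset.mem_univ j1),
              Finset.sdiff_singleton_eq_erase]
            have := Finset.sum_erase_add Finset.univ s' (Finset.mem_univ j1)
            omega
    have hIH : ∀ i : Fin (2*m+1),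
        |∫ φ : (EuclideanSpace ℝ (Fin d)) → ℝ,
            ∏ k, (φ (x k)) ^ (s' k - if z' i = k then 1 else 0) ∂μ|
          ≤ (c₁*(1+packC d))^m *
              ∏ k, Real.sqrt ((s' k - if z' i = k then 1 else 0).factorial) :=
      fun i => IH _ (htsum (z' i) (hfib i))
    set P : ℝ := ∏ j, Real.sqrt ((s j).factorial) with hPdef
    have hPnn : 0 ≤ P := Finset.prod_nonneg (fun j _ => Real.sqrt_nonneg _)
    set G : Fin n → ℝ := fun j1 => K (x j0) (x j1) *
      ((c₁*(1+packC d))^m * ∏ k, Real.sqrt ((s' k - if j1 = k then 1 else 0).factorial))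
      with hGdef
    set D : Fin n → ℝ := fun j1 =>
      if j1 = j0 then c₁ else c₁ * Real.exp (-2 * dist (x j0) (x j1)) with hDdef
    have hDnn : ∀ j1, 0 ≤ D j1 := by
      intro j1
      rw [hDdef]
      dsimp only
      split_ifs
      · exact hc₁.le
      · positivity
    have habs : |∫ φ : (EuclideanSpace ℝ (Fin d)) → ℝ, ∏ j, (φ (x j)) ^ (s j) ∂μ|
        ≤ ∑ i : Fin (2*m+1), G (z' i) := by
      rw [hM]
      refine (Finset.abs_sum_le_sum_abs _ _).trans ?_
      refine Finset.sum_le_sum (fun i _ => ?_)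
      rw [abs_mul, abs_of_nonneg (hK _ _).1, hGdef]
      exact mul_le_mul_of_nonneg_left (hIH i) (hK _ _).1
    have hgroup : ∑ i : Fin (2*m+1), G (z' i) = ∑ j1, (s' j1 : ℝ) * G j1 := by
      rw [sum_comp_mul Finset.univ z' G]
      exact Finset.sum_congr rfl (fun j1 _ => by rw [hz' j1])
    have hper : ∀ j1, (s' j1 : ℝ) * G j1 ≤ D j1 * ((c₁*(1+packC d))^m * P) := by
      intro j1
      by_cases hz0 : s' j1 = 0
      · rw [hz0]
        push_cast
        rw [zero_mul]
        have : 0 ≤ (c₁*(1+packC d))^m * P := mul_nonneg (pow_nonneg hcpos.le m) hPnn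
        exact mul_nonneg (hDnn j1) this
      · have h1' : 1 ≤ s' j1 := by omega
        have hKle : K (x j0) (x j1) ≤ D j1 := by
          rw [hDdef]
          dsimp only
          by_cases hjj : j1 = j0
          · subst hjj
            rw [if_pos rfl]
            have := (hK (x j1) (x j1)).2
            rwa [dist_self, mul_zero, Real.exp_zero, mul_one] at this
          · rw [if_neg hjj]
            exact (hK (x j0) (x j1)).2
        have hkey : (s' j1 : ℝ) *
            (∏ k, Real.sqrt ((s' k - if j1 = k then 1 else 0).factorial)) ≤ P := by
          rw [hPdef, hs'def]
          exact key_ineq s j0 j1 hmax h1 (by rw [← hs'def]; exact h1')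
        calc (s' j1 : ℝ) * G j1
            = (K (x j0) (x j1) * (c₁*(1+packC d))^m) *
                ((s' j1 : ℝ) * ∏ k, Real.sqrt ((s' k - if j1 = k then 1 else 0).factorial)) := by
              rw [hGdef]; ring
          _ ≤ (D j1 * (c₁*(1+packC d))^m) * P := by
              apply mul_le_mul
              · exact mul_le_mul_of_nonneg_right hKle (pow_nonneg hcpos.le m)
              · exact hkey
              · exact mul_nonneg (Nat.cast_nonneg _)
                  (Finset.prod_nonneg (fun k _ => Real.sqrt_nonneg _))
              · exact mul_nonneg (hDnn j1) (pow_nonneg hcpos.le m)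
          _ = D j1 * ((c₁*(1+packC d))^m * P) := by ring
    have hDsum : ∑ j1, D j1 ≤ c₁ * (1 + packC d) := by
      have hsplit : ∑ j1, D j1
          = (∑ j1 ∈ Finset.univ.erase j0, c₁ * Real.exp (-2 * dist (x j0) (x j1))) + c₁ := by
        rw [← Finset.sum_erase_add _ _ (Finset.mem_univ j0)]
        congr 1
        · refine Finset.sum_congr rfl (fun j1 hj1 => ?_)
          rw [hDdef]
          dsimp only
          rw [if_neg (Finset.mem_erase.1 hj1).1]
        · rw [hDdef]
          dsimp only
          rw [if_pos rfl]
      rw [hsplit, ← Finset.mul_sum]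
      have hpack := packing_bound d n x hsep j0
      nlinarith
    calc |∫ φ : (EuclideanSpace ℝ (Fin d)) → ℝ, ∏ j, (φ (x j)) ^ (s j) ∂μ|
        ≤ ∑ i : Fin (2*m+1), G (z' i) := habs
      _ = ∑ j1, (s' j1 : ℝ) * G j1 := hgroup
      _ ≤ ∑ j1, D j1 * ((c₁*(1+packC d))^m * P) := Finset.sum_le_sum (fun j1 _ => hper j1)
      _ = (∑ j1, D j1) * ((c₁*(1+packC d))^m * P) := by rw [Finset.sum_mul]
      _ ≤ (c₁ * (1 + packC d)) * ((c₁*(1+packC d))^m * P) := by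
          apply mul_le_mul_of_nonneg_right hDsum
          exact mul_nonneg (pow_nonneg hcpos.le m) hPnn
      _ = (c₁ * (1 + packC d)) ^ (m+1) * P := by ring
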